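/- arXiv:1701.05272 — 2 statements merged into one kernel-verified Lean document; each statement's English description precedes it below -/
import Mathlib

section
/- Let V, W, Z be finite-dimensional real inner product spaces, h : V → W and g : W → Z linear maps, and E ⊆ V a subspace. Then sup over unit vectors v ∈ E^⊥ of ‖P_{(g h E)^⊥}(g h v)‖ is at most ( sup over unit u ∈ (hE)^⊥ of ‖P_{(g h E)^⊥}(g u)‖ ) · ( sup over unit v ∈ E^⊥ of ‖P_{(hE)^⊥}(h v)‖ ). -/
private lemma proj_norm_le' {Z : Type*} [NormedAddCommGroup Z] [InnerProductSpace ℝ Z]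
    [FiniteDimensional ℝ Z] (K : Submodule ℝ Z) (x : Z) :
    ‖(Submodule.orthogonalProjectionOnto K x : Z)‖ ≤ ‖x‖ := by
  calc ‖(Submodule.orthogonalProjectionOnto K x : Z)‖ = ‖Submodule.orthogonalProjectionOnto K x‖ := rfl
    _ ≤ ‖Submodule.orthogonalProjectionOnto K‖ * ‖x‖ := (Submodule.orthogonalProjectionOnto K).le_opNorm x
    _ ≤ 1 * ‖x‖ := mul_le_mul_of_nonneg_right (Submodule.orthogonalProjectionOnto_norm_le K) (norm_nonneg x)
    _ = ‖x‖ := one_mul _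

/-- Submultiplicativity of the transverse expansion quantity:
`sup_{v ∈ Eᗮ, ‖v‖=1} ‖P_{(ghE)ᗮ}(ghv)‖ ≤ (sup_{u ∈ (hE)ᗮ, ‖u‖=1} ‖P_{(ghE)ᗮ}(gu)‖) ·
(sup_{v ∈ Eᗮ, ‖v‖=1} ‖P_{(hE)ᗮ}(hv)‖)`. -/
theorem stmt6 {V W Z : Type*} [NormedAddCommGroup V] [InnerProductSpace ℝ V]
    [NormedAddCommGroup W] [InnerProductSpace ℝ W]
    [NormedAddCommGroup Z] [InnerProductSpace ℝ Z]
    [FiniteDimensional ℝ V] [FiniteDimensional ℝ W] [FiniteDimensional ℝ Z]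
    (h : V →ₗ[ℝ] W) (g : W →ₗ[ℝ] Z) (E : Submodule ℝ V) :
    sSup {r : ℝ | ∃ v ∈ Eᗮ, ‖v‖ = 1 ∧
        r = ‖(Submodule.orthogonalProjectionOnto ((E.map h).map g)ᗮ (g (h v)) : Z)‖} ≤
      sSup {r : ℝ | ∃ u ∈ (E.map h)ᗮ, ‖u‖ = 1 ∧
          r = ‖(Submodule.orthogonalProjectionOnto ((E.map h).map g)ᗮ (g u) : Z)‖} *
      sSup {r : ℝ | ∃ v ∈ Eᗮ, ‖v‖ = 1 ∧
          r = ‖(Submodule.orthogonalProjectionOnto (E.map h)ᗮ (h v) : W)‖} := by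
  set G := (E.map h).map g with hG
  set SA := {r : ℝ | ∃ u ∈ (E.map h)ᗮ, ‖u‖ = 1 ∧
      r = ‖(Submodule.orthogonalProjectionOnto Gᗮ (g u) : Z)‖} with hSA
  set SB := {r : ℝ | ∃ v ∈ Eᗮ, ‖v‖ = 1 ∧
      r = ‖(Submodule.orthogonalProjectionOnto (E.map h)ᗮ (h v) : W)‖} with hSB
  set gc := LinearMap.toContinuousLinearMap g with hgc
  set hc := LinearMap.toContinuousLinearMap h with hhc
  have hbddA : BddAbove SA := by
    refine ⟨‖gc‖, fun r hr => ?_⟩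
    obtain ⟨u, _, hu1, rfl⟩ := hr
    calc ‖(Submodule.orthogonalProjectionOnto Gᗮ (g u) : Z)‖ ≤ ‖g u‖ := proj_norm_le' _ _
      _ = ‖gc u‖ := by rw [hgc]; simp
      _ ≤ ‖gc‖ * ‖u‖ := gc.le_opNorm u
      _ = ‖gc‖ := by rw [hu1, mul_one]
  have hbddB : BddAbove SB := by
    refine ⟨‖hc‖, fun r hr => ?_⟩
    obtain ⟨v, _, hv1, rfl⟩ := hr
    calc ‖(Submodule.orthogonalProjectionOnto (E.map h)ᗮ (h v) : W)‖ ≤ ‖h v‖ := proj_norm_le' _ _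
      _ = ‖hc v‖ := by rw [hhc]; simp
      _ ≤ ‖hc‖ * ‖v‖ := hc.le_opNorm v
      _ = ‖hc‖ := by rw [hv1, mul_one]
  have hAnn : 0 ≤ sSup SA := Real.sSup_nonneg (by rintro r ⟨u, _, _, rfl⟩; positivity)
  have hBnn : 0 ≤ sSup SB := Real.sSup_nonneg (by rintro r ⟨v, _, _, rfl⟩; positivity)
  apply Real.sSup_le _ (mul_nonneg hAnn hBnn)
  rintro r ⟨v, hv, hv1, rfl⟩
  set u' : W := (Submodule.orthogonalProjectionOnto (E.map h)ᗮ (h v) : W) with hu'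
  -- step 1 : projection equality
  have hdiff : h v - u' ∈ E.map h := by
    have h1 : h v - u' ∈ (E.map h)ᗮᗮ :=
      Submodule.sub_starProjection_mem_orthogonal (K := (E.map h)ᗮ) (h v)
    rwa [Submodule.orthogonal_orthogonal] at h1
  have hproj0 : Submodule.orthogonalProjectionOnto Gᗮ (g (h v - u')) = 0 :=
    Submodule.orthogonalProjectionOnto_eq_zero_iff.mpr
      (Submodule.le_orthogonal_orthogonal _ (Submodule.mem_map_of_mem hdiff))
  have heq : (Submodule.orthogonalProjectionOnto Gᗮ (g (h v)) : Z)
      = (Submodule.orthogonalProjectionOnto Gᗮ (g u') : Z) := by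
    have : Submodule.orthogonalProjectionOnto Gᗮ (g (h v)) - Submodule.orthogonalProjectionOnto Gᗮ (g u') = 0 := by
      rw [← map_sub, ← map_sub]; exact hproj0
    have := sub_eq_zero.mp this
    exact_mod_cast congrArg (Subtype.val) this
  rw [heq]
  -- step 2
  have hu'mem : u' ∈ (E.map h)ᗮ := Subtype.coe_prop _
  have hu'B : ‖u'‖ ≤ sSup SB := le_csSup hbddB ⟨v, hv, hv1, rfl⟩
  have step2 : ‖(Submodule.orthogonalProjectionOnto Gᗮ (g u') : Z)‖ ≤ sSup SA * ‖u'‖ := by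
    rcases eq_or_ne u' 0 with h0 | h0
    · simp [h0]
    · set u := ‖u'‖⁻¹ • u' with hu
      have hnu : ‖u‖ = 1 := by
        rw [hu, norm_smul, norm_inv, norm_norm, inv_mul_cancel₀ (norm_ne_zero_iff.mpr h0)]
      have humem : u ∈ (E.map h)ᗮ := Submodule.smul_mem _ _ hu'mem
      have hA : ‖(Submodule.orthogonalProjectionOnto Gᗮ (g u) : Z)‖ ≤ sSup SA :=
        le_csSup hbddA ⟨u, humem, hnu, rfl⟩
      have hscale : (Submodule.orthogonalProjectionOnto Gᗮ (g u') : Z)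
          = ‖u'‖ • (Submodule.orthogonalProjectionOnto Gᗮ (g u) : Z) := by
        rw [hu, map_smul, map_smul]
        push_cast
        rw [smul_smul, mul_inv_cancel₀ (norm_ne_zero_iff.mpr h0), one_smul]
      rw [hscale, norm_smul, norm_norm, mul_comm]
      exact mul_le_mul_of_nonneg_right hA (norm_nonneg _)
  calc ‖(Submodule.orthogonalProjectionOnto Gᗮ (g u') : Z)‖ ≤ sSup SA * ‖u'‖ := step2
    _ ≤ sSup SA * sSup SB := mul_le_mul_of_nonneg_left hu'B hAnn
end

section
/- Let F : D → R^N be a C¹ map on an open set D ⊆ R^K (K ≥ N) such that for every B ∈ D there is an N-dimensional subspace P' ⊆ R^K with |det(DF(B)|_{P'})| > κ₀ > 0 (with respect to orthonormal bases), and suppose ‖DF‖ ≤ A on D. Let S ⊆ R^N be measurable with Lebesgue measure |S|. Then the Lebesgue measure of F^{-1}(S) ∩ D₀ for any compact D₀ ⊂ D satisfies |F^{-1}(S) ∩ D₀| ≤ C(κ₀, A, N, K, D₀) · |S|, i.e., preimages of small-measure sets under uniform submersions have small measure. -/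
open MeasureTheory

noncomputable section Helpers

private def boolSigmaEquiv (α β : Type) : (Σ b : Bool, cond b α β) ≃ α ⊕ β where
  toFun x := x.1.rec (motive := fun b => cond b α β → α ⊕ β) Sum.inr Sum.inl x.2
  invFun x := match x with | Sum.inl a => ⟨true, a⟩ | Sum.inr b => ⟨false, b⟩
  left_inv := by rintro ⟨(_|_), x⟩ <;> rfl
  right_inv := by rintro (x|x) <;> rfl

private lemma adapted_basis {K N : ℕ} (P : Submodule ℝ (EuclideanSpace ℝ (Fin K)))
    (hPrank : Module.finrank ℝ P = N) :
    ∃ (c : OrthonormalBasis (Fin N) ℝ P)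
      (b : OrthonormalBasis (Fin N ⊕ Fin (Module.finrank ℝ Pᗮ)) ℝ (EuclideanSpace ℝ (Fin K))),
      ∀ i, b (Sum.inl i) = (c i : EuclideanSpace ℝ (Fin K)) := by
  classical
  have hInt : DirectSum.IsInternal (fun b : Bool => cond b P Pᗮ) := by
    rw [P.orthogonalFamily_self.isInternal_iff, iSup_bool_eq]
    show (P ⊔ Pᗮ)ᗮ = ⊥
    rw [Submodule.sup_orthogonal_of_hasOrthogonalProjection, Submodule.top_orthogonal_eq_bot]
  letI : ∀ b : Bool, Fintype (cond b (Fin N) (Fin (Module.finrank ℝ Pᗮ))) := fun b =>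
    match b with
    | true => inferInstanceAs (Fintype (Fin N))
    | false => inferInstanceAs (Fintype (Fin (Module.finrank ℝ Pᗮ)))
  refine ⟨(stdOrthonormalBasis ℝ P).reindex (finCongr hPrank),
    (hInt.collectedOrthonormalBasis P.orthogonalFamily_self
      (fun i => i.rec (motive := fun b =>
          OrthonormalBasis (cond b (Fin N) (Fin (Module.finrank ℝ Pᗮ))) ℝ ↥(cond b P Pᗮ))
        (stdOrthonormalBasis ℝ Pᗮ)
        ((stdOrthonormalBasis ℝ P).reindex (finCongr hPrank)))).reindex
      (boolSigmaEquiv (Fin N) (Fin (Module.finrank ℝ Pᗮ))), fun i => ?_⟩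
  rw [OrthonormalBasis.reindex_apply]
  have h1 : (boolSigmaEquiv (Fin N) (Fin (Module.finrank ℝ Pᗮ))).symm (Sum.inl i)
      = ⟨true, i⟩ := rfl
  rw [h1, DirectSum.IsInternal.collectedOrthonormalBasis,
    Module.Basis.coe_toOrthonormalBasis, hInt.collectedBasis_coe]
  simp

private lemma coord_le_norm {ι : Type*} [Fintype ι] (w : EuclideanSpace ℝ ι) (i : ι) :
    |w i| ≤ ‖w‖ := by
  rw [EuclideanSpace.norm_eq, ← Real.sqrt_sq_eq_abs]
  apply Real.sqrt_le_sqrt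
  have : |w i| ^ 2 ≤ ∑ j, ‖w j‖ ^ 2 := by
    have := Finset.single_le_sum (f := fun j => ‖w j‖ ^ 2)
      (fun j _ => by positivity) (Finset.mem_univ i)
    simpa [Real.norm_eq_abs, sq_abs] using this
  simpa [sq_abs] using this

private lemma slab_vol (N M : ℕ) {R : ℝ} (hR : 0 ≤ R) (S : Set (EuclideanSpace ℝ (Fin N)))
    (hS : MeasurableSet S) :
    MeasurableSet {w : EuclideanSpace ℝ (Fin N ⊕ Fin M) |
        WithLp.toLp 2 (fun i => w (Sum.inl i)) ∈ S ∧ ∀ j, |w (Sum.inr j)| ≤ R} ∧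
    volume {w : EuclideanSpace ℝ (Fin N ⊕ Fin M) |
        WithLp.toLp 2 (fun i => w (Sum.inl i)) ∈ S ∧ ∀ j, |w (Sum.inr j)| ≤ R}
      ≤ ENNReal.ofReal ((2*R)^M) * volume S := by
  classical
  set e := (MeasurableEquiv.toLp 2 ((Fin N ⊕ Fin M) → ℝ)).symm
  set e' := (MeasurableEquiv.toLp 2 (Fin N → ℝ)).symm
  set S' : Set (Fin N → ℝ) := e'.symm ⁻¹' S with hS'
  have hS'm : MeasurableSet S' := e'.symm.measurable hS
  set B : Set (Fin M → ℝ) := Set.pi Set.univ (fun _ => Set.Icc (-R) R) with hB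
  set W : Set ((Fin N ⊕ Fin M) → ℝ) :=
    (MeasurableEquiv.sumPiEquivProdPi (fun _ => ℝ)) ⁻¹' (S' ×ˢ B) with hW
  have hWm : MeasurableSet W :=
    (MeasurableEquiv.sumPiEquivProdPi _).measurable
      (hS'm.prod (MeasurableSet.univ_pi fun _ => measurableSet_Icc))
  have hset : {w : EuclideanSpace ℝ (Fin N ⊕ Fin M) |
        WithLp.toLp 2 (fun i => w (Sum.inl i)) ∈ S ∧ ∀ j, |w (Sum.inr j)| ≤ R} = e ⁻¹' W := by
    ext w
    simp only [Set.mem_setOf_eq, Set.mem_preimage, hW, Set.mem_prod,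
      MeasurableEquiv.coe_sumPiEquivProdPi, Equiv.sumPiEquivProdPi_apply, hS',
      Set.mem_pi, Set.mem_univ, forall_true_left, Set.mem_Icc, hB,
        MeasurableEquiv.symm_symm, MeasurableEquiv.coe_toLp, MeasurableEquiv.coe_toLp_symm]
    constructor
    · rintro ⟨h1, h2⟩
      exact ⟨h1, fun j => abs_le.mp (h2 j)⟩
    · rintro ⟨h1, h2⟩
      exact ⟨h1, fun j => abs_le.mpr (h2 j)⟩
  refine ⟨hset ▸ e.measurable hWm, ?_⟩
  rw [hset, (EuclideanSpace.volume_preserving_symm_measurableEquiv_toLp _).measure_preimage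
    hWm.nullMeasurableSet]
  have h2 : volume W = volume (S' ×ˢ B) :=
    (volume_measurePreserving_sumPiEquivProdPi (fun _ : Fin N ⊕ Fin M => ℝ)).measure_preimage
      (hS'm.prod (MeasurableSet.univ_pi fun _ => measurableSet_Icc)).nullMeasurableSet
  rw [h2]
  have h3 : volume (S' ×ˢ B) = volume S' * volume B := by
    rw [show (volume : Measure ((Fin N → ℝ) × (Fin M → ℝ))) = Measure.prod volume volume from rfl,
      Measure.prod_prod]
  have h4 : volume S' = volume S :=
    ((EuclideanSpace.volume_preserving_symm_measurableEquiv_toLp (Fin N)).symm _).measure_preimage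
      hS.nullMeasurableSet
  have h5 : volume B = ENNReal.ofReal ((2*R)^M) := by
    rw [hB, volume_pi_pi]
    simp only [Real.volume_Icc, sub_neg_eq_add]
    rw [Finset.prod_const, ← ENNReal.ofReal_pow (by linarith)]
    norm_num [two_mul]
  rw [h3, h4, h5, mul_comm]

set_option maxHeartbeats 1000000 in
private lemma local_bound {K N : ℕ} {D : Set (EuclideanSpace ℝ (Fin K))} (hD : IsOpen D)
    {F : EuclideanSpace ℝ (Fin K) → EuclideanSpace ℝ (Fin N)}
    (hF : ContDiffOn ℝ 1 F D) {x₀ : EuclideanSpace ℝ (Fin K)} (hx₀ : x₀ ∈ D)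
    (P : Submodule ℝ (EuclideanSpace ℝ (Fin K))) (hPrank : Module.finrank ℝ P = N)
    (hPinj : ∀ v ∈ P, fderiv ℝ F x₀ v = 0 → v = 0) :
    ∃ U : Set (EuclideanSpace ℝ (Fin K)), IsOpen U ∧ x₀ ∈ U ∧ ∃ c : ℝ, 0 < c ∧
      ∀ S : Set (EuclideanSpace ℝ (Fin N)), MeasurableSet S →
        volume (F ⁻¹' S ∩ U) ≤ ENNReal.ofReal c * volume S := by
  classical
  set M := Module.finrank ℝ Pᗮ with hM
  obtain ⟨c0, bb, hbl⟩ := adapted_basis P hPrank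
  set ρ : ↥P →L[ℝ] (EuclideanSpace ℝ (Fin N)) := c0.repr.toLinearIsometry.toContinuousLinearMap with hρ
  set π' : (EuclideanSpace ℝ (Fin K)) →L[ℝ] (EuclideanSpace ℝ (Fin N)) := ρ.comp P.orthogonalProjectionOnto with hπ'
  set emb : (EuclideanSpace ℝ (Fin N)) →L[ℝ] (EuclideanSpace ℝ (Fin K)) :=
    P.subtypeL.comp c0.repr.symm.toLinearIsometry.toContinuousLinearMap with hemb
  set QL : (EuclideanSpace ℝ (Fin K)) →L[ℝ] (EuclideanSpace ℝ (Fin K)) := Pᗮ.subtypeL.comp Pᗮ.orthogonalProjectionOnto with hQL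
  set G : (EuclideanSpace ℝ (Fin K)) → (EuclideanSpace ℝ (Fin K)) := fun y => emb (F y) + QL y with hG
  set G' : (EuclideanSpace ℝ (Fin K)) → ((EuclideanSpace ℝ (Fin K)) →L[ℝ] (EuclideanSpace ℝ (Fin K))) := fun x => (emb.comp (fderiv ℝ F x)) + QL with hG'
  have hπemb : ∀ s : (EuclideanSpace ℝ (Fin N)), π' (emb s) = s := by
    intro s
    simp [hπ', hemb, hρ, Submodule.orthogonalProjectionOnto_mem_subspace_eq_self]
  have hπQ : ∀ z : (EuclideanSpace ℝ (Fin K)), π' (QL z) = 0 := by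
    intro z
    show ρ (P.orthogonalProjectionOnto ((Pᗮ.orthogonalProjectionOnto z : EuclideanSpace ℝ (Fin K)))) = 0
    rw [Submodule.orthogonalProjectionOnto_apply_of_mem_orthogonal (Submodule.coe_mem _), map_zero]
  have hπG : ∀ y, π' (G y) = F y := by
    intro y; rw [hG]; simp only [map_add, hπemb, hπQ, add_zero]
  have hπcoord : ∀ (z : (EuclideanSpace ℝ (Fin K))) (i : Fin N), π' z i = bb.repr z (Sum.inl i) := by
    intro z i
    rw [OrthonormalBasis.repr_apply_apply, hbl]
    show c0.repr (P.orthogonalProjectionOnto z) i = _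
    rw [OrthonormalBasis.repr_apply_apply]
    exact Submodule.inner_orthogonalProjectionOnto_eq_of_mem_left (K := P) (c0 i) z
  -- derivative facts
  have hFd : ∀ x ∈ D, HasFDerivAt F (fderiv ℝ F x) x := fun x hx =>
    ((hF.contDiffAt (hD.mem_nhds hx)).differentiableAt one_ne_zero).hasFDerivAt
  have hGd : ∀ x ∈ D, HasFDerivAt G (G' x) x := fun x hx =>
    (emb.hasFDerivAt.comp x (hFd x hx)).add QL.hasFDerivAt
  have hFs : HasStrictFDerivAt F (fderiv ℝ F x₀) x₀ :=
    (hF.contDiffAt (hD.mem_nhds hx₀)).hasStrictFDerivAt one_ne_zero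
  have hGs : HasStrictFDerivAt G (G' x₀) x₀ :=
    (emb.hasStrictFDerivAt.comp x₀ hFs).add QL.hasStrictFDerivAt
  -- injectivity of the derivative
  have hker : ∀ v, G' x₀ v = 0 → v = 0 := by
    intro v hv
    have h1 : fderiv ℝ F x₀ v = 0 := by
      have h := congrArg π' hv
      simpa [hG', map_add, hπemb, hπQ] using h
    have h2 : QL v = 0 := by
      have : G' x₀ v = emb (fderiv ℝ F x₀ v) + QL v := rfl
      rw [this, h1, map_zero, zero_add] at hv; exact hv
    have h3 : Pᗮ.orthogonalProjectionOnto v = 0 := by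
      have : (↑(Pᗮ.orthogonalProjectionOnto v) : (EuclideanSpace ℝ (Fin K))) = 0 := h2
      exact_mod_cast this
    have h4 : v ∈ Pᗮᗮ := Submodule.orthogonalProjectionOnto_eq_zero_iff.mp h3
    rw [Submodule.orthogonal_orthogonal] at h4
    exact hPinj v h4 h1
  have hinjder : Function.Injective (G' x₀) := by
    intro a b hab
    have := hker (a - b) (by rw [map_sub, hab, sub_self])
    exact sub_eq_zero.mp this
  have hbij : Function.Bijective ((G' x₀) : (EuclideanSpace ℝ (Fin K)) →ₗ[ℝ] (EuclideanSpace ℝ (Fin K))) :=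
    ⟨hinjder, LinearMap.injective_iff_surjective.mp hinjder⟩
  set eL : (EuclideanSpace ℝ (Fin K)) ≃L[ℝ] (EuclideanSpace ℝ (Fin K)) := (LinearEquiv.ofBijective _ hbij).toContinuousLinearEquiv with heL
  have heLc : (eL : (EuclideanSpace ℝ (Fin K)) →L[ℝ] (EuclideanSpace ℝ (Fin K))) = G' x₀ := by ext v; rfl
  have hdet0 : (G' x₀).det ≠ 0 := by
    intro h
    have hlt := LinearMap.bot_lt_ker_of_det_eq_zero (f := ((G' x₀) : (EuclideanSpace ℝ (Fin K)) →ₗ[ℝ] (EuclideanSpace ℝ (Fin K)))) h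
    rw [LinearMap.ker_eq_bot.mpr hinjder] at hlt
    exact lt_irrefl _ hlt
  set ε : ℝ := |(G' x₀).det| / 2 with hε
  have hεpos : 0 < ε := by
    have : 0 < |(G' x₀).det| := abs_pos.mpr hdet0
    positivity
  -- continuity of determinant
  have hcontG' : ContinuousOn G' D := by
    apply ContinuousOn.add _ continuousOn_const
    exact ((ContinuousLinearMap.compL ℝ (EuclideanSpace ℝ (Fin K)) (EuclideanSpace ℝ (Fin N)) (EuclideanSpace ℝ (Fin K)) emb).continuous).comp_continuousOn
      (hF.continuousOn_fderiv_of_isOpen hD le_rfl)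
  have hcontdet : ContinuousOn (fun x => |(G' x).det|) D :=
    (continuous_abs.comp ContinuousLinearMap.continuous_det).comp_continuousOn hcontG'
  set U₁ : Set (EuclideanSpace ℝ (Fin K)) := D ∩ (fun x => |(G' x).det|) ⁻¹' Set.Ioi ε with hU₁
  have hU₁open : IsOpen U₁ := hcontdet.isOpen_inter_preimage hD isOpen_Ioi
  have hx₀U₁ : x₀ ∈ U₁ := by
    refine ⟨hx₀, ?_⟩
    simp only [Set.mem_preimage, Set.mem_Ioi, hε]
    have : 0 < |(G' x₀).det| := abs_pos.mpr hdet0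
    linarith
  -- inverse function theorem
  have hGs' : HasStrictFDerivAt G (eL : (EuclideanSpace ℝ (Fin K)) →L[ℝ] (EuclideanSpace ℝ (Fin K))) x₀ := by rw [heLc]; exact hGs
  set φ := hGs'.toOpenPartialHomeomorph G with hφ
  have hx₀φ : x₀ ∈ φ.source := hGs'.mem_toOpenPartialHomeomorph_source
  have hinjG : Set.InjOn G φ.source := by
    have := φ.injOn
    rwa [hφ, HasStrictFDerivAt.toOpenPartialHomeomorph_coe] at this
  -- radius
  obtain ⟨r, hr0, hrD⟩ : ∃ r > 0, Metric.closedBall x₀ r ⊆ D := by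
    rcases (Metric.nhds_basis_closedBall.mem_iff).mp (hD.mem_nhds hx₀) with ⟨r, hr0, hr⟩
    exact ⟨r, hr0, hr⟩
  obtain ⟨M₀, hM₀⟩ : ∃ M₀, ∀ y ∈ Metric.closedBall x₀ r, ‖F y‖ ≤ M₀ := by
    have hcpt : IsCompact (F '' Metric.closedBall x₀ r) :=
      (isCompact_closedBall x₀ r).image_of_continuousOn (hF.continuousOn.mono hrD)
    rcases isBounded_iff_forall_norm_le.mp hcpt.isBounded with ⟨C, hC⟩
    exact ⟨C, fun y hy => hC _ (Set.mem_image_of_mem F hy)⟩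
  have hM₀0 : 0 ≤ M₀ := le_trans (norm_nonneg _) (hM₀ x₀ (Metric.mem_closedBall_self hr0.le))
  set R : ℝ := M₀ + (‖x₀‖ + r) with hR
  have hRpos : 0 < R := by positivity
  have hGbound : ∀ y ∈ Metric.closedBall x₀ r, ‖G y‖ ≤ R := by
    intro y hy
    have h1 : ‖emb (F y)‖ = ‖F y‖ := c0.repr.symm.norm_map (F y)
    have h2 : ‖QL y‖ ≤ ‖y‖ := by
      calc ‖QL y‖ = ‖Pᗮ.orthogonalProjectionOnto y‖ := rfl
        _ ≤ 1 * ‖y‖ := (Pᗮ.orthogonalProjectionOnto).le_of_opNorm_le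
            (Submodule.orthogonalProjectionOnto_norm_le (K := Pᗮ)) y
        _ = ‖y‖ := one_mul _
    have h3 : ‖y‖ ≤ ‖x₀‖ + r := by
      calc ‖y‖ = ‖x₀ + (y - x₀)‖ := by rw [show x₀ + (y - x₀) = y by abel]
        _ ≤ ‖x₀‖ + ‖y - x₀‖ := norm_add_le _ _
        _ ≤ ‖x₀‖ + r := by
            have : ‖y - x₀‖ ≤ r := by
              rw [← dist_eq_norm]; exact Metric.mem_closedBall.mp hy
            linarith
    calc ‖G y‖ ≤ ‖emb (F y)‖ + ‖QL y‖ := norm_add_le _ _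
      _ ≤ M₀ + (‖x₀‖ + r) := by
          rw [h1]
          have := hM₀ y hy
          linarith
  set U : Set (EuclideanSpace ℝ (Fin K)) := (U₁ ∩ φ.source) ∩ Metric.ball x₀ r with hU
  have hUopen : IsOpen U := ((hU₁open.inter φ.open_source).inter Metric.isOpen_ball)
  have hx₀U : x₀ ∈ U := ⟨⟨hx₀U₁, hx₀φ⟩, Metric.mem_ball_self hr0⟩
  have hUD : U ⊆ D := fun x hx => hx.1.1.1
  refine ⟨U, hUopen, hx₀U, (2*R)^M / ε, by positivity, ?_⟩
  intro S hS
  set s : Set (EuclideanSpace ℝ (Fin K)) := F ⁻¹' S ∩ U with hs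
  have hsU : s ⊆ U := Set.inter_subset_right
  have hsD : s ⊆ D := fun x hx => hUD (hsU hx)
  have hsmeas : MeasurableSet s := by
    have hUm : MeasurableSet U := hUopen.measurableSet
    have hFc : Continuous (U.restrict F) :=
      ContinuousOn.restrict (hF.continuousOn.mono hUD)
    have h1 : MeasurableSet (U.restrict F ⁻¹' S) := hFc.measurable hS
    have h2 := hUm.subtype_image h1
    have h3 : Subtype.val '' (U.restrict F ⁻¹' S) = F ⁻¹' S ∩ U := by
      ext x
      constructor
      · rintro ⟨⟨x, hxU⟩, hx1, rfl⟩
        exact ⟨hx1, hxU⟩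
      · rintro ⟨hx1, hxU⟩
        exact ⟨⟨x, hxU⟩, hx1, rfl⟩
    rwa [h3] at h2
  obtain ⟨hWmeas, hWvol⟩ := slab_vol N M hRpos.le S hS
  set W : Set (EuclideanSpace ℝ (Fin N ⊕ Fin M)) :=
    {w | WithLp.toLp 2 (fun i => w (Sum.inl i)) ∈ S ∧ ∀ j, |w (Sum.inr j)| ≤ R} with hW
  have himg : G '' s ⊆ bb.repr ⁻¹' W := by
    rintro _ ⟨y, hy, rfl⟩
    have hyU := hsU hy
    constructor
    · have heq : WithLp.toLp 2 (fun i => bb.repr (G y) (Sum.inl i)) = F y := by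
        ext i; show bb.repr (G y) (Sum.inl i) = F y i; rw [← hπcoord, hπG]
      show WithLp.toLp 2 (fun i => bb.repr (G y) (Sum.inl i)) ∈ S
      rw [heq]; exact hy.1
    · intro j
      calc |bb.repr (G y) (Sum.inr j)| ≤ ‖bb.repr (G y)‖ := coord_le_norm _ _
        _ = ‖G y‖ := bb.repr.norm_map _
        _ ≤ R := hGbound y (Metric.ball_subset_closedBall hyU.2)
  have hmeasfn : Measurable fun x => ENNReal.ofReal |(G' x).det| := by
    have hmG' : Measurable G' := by
      have h1 : Measurable fun x => emb.comp (fderiv ℝ F x) :=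
        ((ContinuousLinearMap.compL ℝ (EuclideanSpace ℝ (Fin K)) (EuclideanSpace ℝ (Fin N)) (EuclideanSpace ℝ (Fin K)) emb).continuous.measurable).comp
          (measurable_fderiv ℝ F)
      exact h1.add_const QL
    exact ENNReal.measurable_ofReal.comp
      ((continuous_abs.comp ContinuousLinearMap.continuous_det).measurable.comp hmG')
  have hmain : ENNReal.ofReal ε * volume s ≤ ENNReal.ofReal ((2*R)^M) * volume S := by
    calc ENNReal.ofReal ε * volume s = ∫⁻ _ in s, ENNReal.ofReal ε := (setLIntegral_const s _).symm
      _ ≤ ∫⁻ x in s, ENNReal.ofReal |(G' x).det| := by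
          refine setLIntegral_mono hmeasfn (fun x hx => ?_)
          exact ENNReal.ofReal_le_ofReal (le_of_lt (hx.2.1.1.2))
      _ ≤ volume (G '' s) :=
          lintegral_abs_det_fderiv_le_addHaar_image volume hsmeas
            (fun x hx => (hGd x (hsD hx)).hasFDerivWithinAt)
            (hinjG.mono (fun x hx => (hsU hx).1.2))
      _ ≤ volume (bb.repr ⁻¹' W) := measure_mono himg
      _ = volume W := bb.measurePreserving_repr.measure_preimage hWmeas.nullMeasurableSet
      _ ≤ ENNReal.ofReal ((2*R)^M) * volume S := hWvol
  have hne : ENNReal.ofReal ε ≠ 0 := by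
    simp [ENNReal.ofReal_eq_zero, not_le, hεpos]
  calc volume (F ⁻¹' S ∩ U) = (ENNReal.ofReal ε)⁻¹ * (ENNReal.ofReal ε * volume s) := by
        rw [← mul_assoc, ENNReal.inv_mul_cancel hne ENNReal.ofReal_ne_top, one_mul]
    _ ≤ (ENNReal.ofReal ε)⁻¹ * (ENNReal.ofReal ((2*R)^M) * volume S) :=
        mul_le_mul_right hmain _
    _ = ENNReal.ofReal ((2*R)^M / ε) * volume S := by
        rw [← mul_assoc]
        congr 1
        rw [← ENNReal.ofReal_inv_of_pos hεpos, ← ENNReal.ofReal_mul (by positivity)]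
        congr 1
        rw [div_eq_mul_inv, mul_comm]

end Helpers

/-- Preimages of small sets under uniform submersions are small: if `F : D → ℝ^N` is `C¹`
with `‖DF‖ ≤ A` and at every point some `N`-dimensional subspace `P'` has
`|det(DF|_{P'})| > κ₀` (expressed via `det(A A*) > κ₀²`), then for every compact
`D₀ ⊆ D` there is `C` with `|F⁻¹(S) ∩ D₀| ≤ C |S|` for all measurable `S`. -/
theorem stmt16 (K N : ℕ) (hKN : N ≤ K)
    (D : Set (EuclideanSpace ℝ (Fin K))) (hD : IsOpen D)
    (F : EuclideanSpace ℝ (Fin K) → EuclideanSpace ℝ (Fin N))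
    (hF : ContDiffOn ℝ 1 F D)
    (A κ₀ : ℝ) (hA : 0 < A) (hκ₀ : 0 < κ₀)
    (hDF : ∀ B ∈ D, ‖fderiv ℝ F B‖ ≤ A)
    (hsub : ∀ B ∈ D, ∃ P' : Submodule ℝ (EuclideanSpace ℝ (Fin K)),
      Module.finrank ℝ P' = N ∧
      κ₀ ^ 2 < LinearMap.det
        ((((fderiv ℝ F B).comp P'.subtypeL).comp
          (ContinuousLinearMap.adjoint ((fderiv ℝ F B).comp P'.subtypeL))) :
            EuclideanSpace ℝ (Fin N) →ₗ[ℝ] EuclideanSpace ℝ (Fin N))) :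
    ∀ D₀ : Set (EuclideanSpace ℝ (Fin K)), IsCompact D₀ → D₀ ⊆ D →
      ∃ C : ℝ, 0 < C ∧ ∀ S : Set (EuclideanSpace ℝ (Fin N)), MeasurableSet S →
        volume (F ⁻¹' S ∩ D₀) ≤ ENNReal.ofReal C * volume S := by
  intro D₀ hD₀ hD₀D
  classical
  have key : ∀ x ∈ D₀, ∃ U : Set (EuclideanSpace ℝ (Fin K)), IsOpen U ∧ x ∈ U ∧
      ∃ c : ℝ, 0 < c ∧ ∀ S : Set (EuclideanSpace ℝ (Fin N)), MeasurableSet S →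
        volume (F ⁻¹' S ∩ U) ≤ ENNReal.ofReal c * volume S := by
    intro x hx
    obtain ⟨P, hPrank, hPdet⟩ := hsub x (hD₀D hx)
    set B := (fderiv ℝ F x).comp P.subtypeL with hB
    have hdetne : LinearMap.det
        ((B.comp (ContinuousLinearMap.adjoint B)) :
          EuclideanSpace ℝ (Fin N) →ₗ[ℝ] EuclideanSpace ℝ (Fin N)) ≠ 0 := by
      have h0 : (0:ℝ) < κ₀ ^ 2 := by positivity
      exact ne_of_gt (lt_trans h0 hPdet)
    have hsurjBB := (LinearMap.equivOfDetNeZero _ hdetne).surjective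
    have hsurjB : Function.Surjective B := by
      intro y
      obtain ⟨z, hz⟩ := hsurjBB y
      refine ⟨(ContinuousLinearMap.adjoint B) z, ?_⟩
      simpa [LinearEquiv.coe_ofIsUnitDet] using hz
    have hinjB : Function.Injective B := by
      have hrk : Module.finrank ℝ ↥P = Module.finrank ℝ (EuclideanSpace ℝ (Fin N)) := by
        rw [hPrank, finrank_euclideanSpace_fin]
      exact (LinearMap.injective_iff_surjective_of_finrank_eq_finrank
        (f := (B : ↥P →ₗ[ℝ] EuclideanSpace ℝ (Fin N))) hrk).mpr hsurjB
    have hPinj : ∀ v ∈ P, fderiv ℝ F x v = 0 → v = 0 := by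
      intro v hv hv0
      have : B ⟨v, hv⟩ = 0 := by
        simp [hB, ContinuousLinearMap.comp_apply, hv0]
      have := hinjB (a₁ := ⟨v, hv⟩) (a₂ := 0) (by simpa using this)
      simpa using congrArg Subtype.val this
    exact local_bound hD hF (hD₀D hx) P hPrank hPinj
  choose! U hUopen hUmem c hcpos hUbound using key
  have hcover : D₀ ⊆ ⋃ p : D₀, U p := by
    intro x hx
    exact Set.mem_iUnion.mpr ⟨⟨x, hx⟩, hUmem x hx⟩
  obtain ⟨t, ht⟩ := hD₀.elim_finite_subcover (fun p : D₀ => U p)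
    (fun p => hUopen p p.2) hcover
  refine ⟨max (∑ p ∈ t, c p) 1, lt_of_lt_of_le one_pos (le_max_right _ _), ?_⟩
  intro S hS
  calc volume (F ⁻¹' S ∩ D₀) ≤ volume (⋃ p ∈ t, F ⁻¹' S ∩ U p) := by
        apply measure_mono
        intro x hx
        obtain ⟨hx1, hx2⟩ := hx
        obtain ⟨p, hp, hxp⟩ := Set.mem_iUnion₂.mp (ht hx2)
        exact Set.mem_iUnion₂.mpr ⟨p, hp, hx1, hxp⟩
    _ ≤ ∑ p ∈ t, volume (F ⁻¹' S ∩ U p) := measure_biUnion_finset_le t _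
    _ ≤ ∑ p ∈ t, ENNReal.ofReal (c p) * volume S := by
        exact Finset.sum_le_sum fun p hp => hUbound p p.2 S hS
    _ = ENNReal.ofReal (∑ p ∈ t, c p) * volume S := by
        rw [← Finset.sum_mul]
        congr 1
        exact (ENNReal.ofReal_sum_of_nonneg (fun p _ => (hcpos p.1 p.2).le)).symm
    _ ≤ ENNReal.ofReal (max (∑ p ∈ t, c p) 1) * volume S := by
        gcongr
        exact le_max_left _ _
end
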